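/- Let E₁, …, E_N be self-adjoint d×d complex matrices satisfying the anticommutation relations E_n E_m + E_m E_n = 2δ_{nm}·I for all n, m. Then for every density matrix ρ (positive semidefinite d×d matrix with trace 1), Σ_{n=1}^N (tr(ρ E_n))² ≤ 1. -/

import Mathlib

set_option maxHeartbeats 1000000

open Matrix
open scoped ComplexOrder

noncomputable section

lemma diag_re_nonneg {d : ℕ} {P : Matrix (Fin d) (Fin d) ℂ} (hP : P.PosSemidef) (i : Fin d) :
    0 ≤ (P i i).re := by
  have := hP.re_dotProduct_nonneg (Pi.single i 1)
  simpa [dotProduct, Matrix.mulVec, Pi.single_apply, Finset.sum_ite_eq,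
    apply_ite] using this

lemma trace_re_nonneg {d : ℕ} {P : Matrix (Fin d) (Fin d) ℂ} (hP : P.PosSemidef) :
    0 ≤ P.trace.re := by
  rw [Matrix.trace, Complex.re_sum]
  exact Finset.sum_nonneg fun i _ => diag_re_nonneg hP i

open MatrixOrder in
lemma trace_mul_re_nonneg {d : ℕ} {ρ M : Matrix (Fin d) (Fin d) ℂ}
    (hρ : ρ.PosSemidef) (hM : M.PosSemidef) : 0 ≤ (ρ * M).trace.re := by
  have h1 : ρ * M = CFC.sqrt ρ * (CFC.sqrt ρ * M) := by
    rw [← mul_assoc, CFC.sqrt_mul_sqrt_self ρ hρ.nonneg]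
  rw [h1, Matrix.trace_mul_comm]
  have : (CFC.sqrt ρ * M * CFC.sqrt ρ).PosSemidef := by
    have := hM.conjTranspose_mul_mul_same (CFC.sqrt ρ)
    rwa [(CFC.sqrt_nonneg ρ).posSemidef.isHermitian.eq] at this
  exact trace_re_nonneg this

/-- Lemma 1, second part: for self-adjoint matrices `E₁, …, E_N` satisfying
the Clifford anticommutation relations `EₙEₘ + EₘEₙ = 2δₙₘ I` and any density matrix `ρ`,
one has `Σₙ (tr(ρ Eₙ))² ≤ 1`. -/
theorem clifford_trace_sq_sum_bound (d N : ℕ) (hd : 1 ≤ d)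
    (E : Fin N → Matrix (Fin d) (Fin d) ℂ)
    (hsa : ∀ n, (E n).IsHermitian)
    (hanti : ∀ n m, E n * E m + E m * E n =
      if n = m then (2 : ℂ) • (1 : Matrix (Fin d) (Fin d) ℂ) else 0)
    (ρ : Matrix (Fin d) (Fin d) ℂ) (hρ : ρ.PosSemidef) (htr : ρ.trace = 1) :
    (∑ n, ((ρ * E n).trace.re) ^ 2) ≤ 1 := by
  classical
  set c : Fin N → ℝ := fun n => ((ρ * E n).trace).re with hc
  set s : ℝ := ∑ n, c n ^ 2 with hs
  show s ≤ 1
  have hs0 : 0 ≤ s := Finset.sum_nonneg fun n _ => sq_nonneg _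
  by_cases hz : s = 0
  · rw [hz]; norm_num
  have hspos : 0 < s := lt_of_le_of_ne hs0 (Ne.symm hz)
  -- trace (ρ * E n) is real
  have hreal : ∀ n, (ρ * E n).trace = (c n : ℂ) := by
    intro n
    have h1 : (starRingEnd ℂ) ((ρ * E n).trace) = (ρ * E n).trace := by
      have : ((ρ * E n)ᴴ).trace = star ((ρ * E n).trace) := Matrix.trace_conjTranspose _
      rw [Matrix.conjTranspose_mul, (hsa n).eq, hρ.isHermitian.eq, Matrix.trace_mul_comm] at this
      exact this.symm
    have := Complex.conj_eq_iff_re.mp h1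
    simpa [hc] using this.symm
  set F : Matrix (Fin d) (Fin d) ℂ := ∑ n, (c n : ℂ) • E n with hF
  have hFherm : F.IsHermitian := by
    unfold F
    simp only [Matrix.IsHermitian, Matrix.conjTranspose_sum, Matrix.conjTranspose_smul,
      Complex.star_def, Complex.conj_ofReal]
    exact Finset.sum_congr rfl fun n _ => by rw [(hsa n).eq]
  -- F * F = s • 1
  have expand : F * F = ∑ n, ∑ m, ((c n : ℂ) * (c m : ℂ)) • (E n * E m) := by
    unfold F
    rw [Finset.sum_mul_sum]
    simp_rw [smul_mul_assoc, mul_smul_comm, smul_smul]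
  have expand' : F * F = ∑ n, ∑ m, ((c n : ℂ) * (c m : ℂ)) • (E m * E n) := by
    rw [expand, Finset.sum_comm]
    exact Finset.sum_congr rfl fun n _ => Finset.sum_congr rfl fun m _ => by rw [mul_comm ((c m : ℂ))]
  have hFF2 : F * F + F * F = ((2 * s : ℝ) : ℂ) • 1 := by
    nth_rewrite 1 [expand]
    nth_rewrite 1 [expand']
    rw [← Finset.sum_add_distrib]
    simp_rw [← Finset.sum_add_distrib, ← smul_add]
    have : ∀ n m : Fin N, ((c n : ℂ) * (c m : ℂ)) • (E n * E m + E m * E n)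
        = if n = m then ((2 : ℝ) * c n ^ 2 : ℂ) • (1 : Matrix (Fin d) (Fin d) ℂ) else 0 := by
      intro n m
      rw [hanti n m]
      by_cases h : n = m
      · subst h
        simp only [ite_true, if_true, smul_smul]
        congr 1
        push_cast
        ring
      · simp [h]
    simp_rw [this]
    simp only [Finset.sum_ite_eq, Finset.sum_ite_eq', Finset.mem_univ, if_true, ite_true]
    rw [← Finset.sum_smul]
    congr 1
    push_cast [hs]
    rw [Finset.mul_sum]
  have hFF : F * F = ((s : ℝ) : ℂ) • 1 := by
    have h2 : (2 : ℂ) • (F * F) = (2 : ℂ) • (((s : ℝ) : ℂ) • (1 : Matrix (Fin d) (Fin d) ℂ)) := by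
      rw [two_smul, hFF2, smul_smul]
      push_cast; ring_nf
    exact smul_right_injective _ two_ne_zero h2
  -- trace (ρ * F) = s
  have htrF : (ρ * F).trace = ((s : ℝ) : ℂ) := by
    unfold F
    rw [Finset.mul_sum]
    simp_rw [Matrix.mul_smul, Matrix.trace_sum, Matrix.trace_smul, hreal]
    rw [hs]
    push_cast
    exact Finset.sum_congr rfl fun n _ => by rw [smul_eq_mul]; ring
  set a : ℝ := Real.sqrt s with ha
  have hapos : 0 < a := Real.sqrt_pos.mpr hspos
  have ha2 : a * a = s := Real.mul_self_sqrt hs0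
  set G : Matrix (Fin d) (Fin d) ℂ := ((a : ℂ)) • 1 - F with hG
  have hGherm : G.IsHermitian := by
    unfold G
    simp only [Matrix.IsHermitian, Matrix.conjTranspose_sub, Matrix.conjTranspose_smul,
      Matrix.conjTranspose_one, Complex.star_def, Complex.conj_ofReal, hFherm.eq]
  have hGG : G * G = ((2 * a : ℝ) : ℂ) • G := by
    unfold G
    simp only [sub_mul, mul_sub, smul_mul_assoc, mul_smul_comm, one_mul, mul_one, hFF,
      smul_sub, smul_smul]
    rw [show ((s : ℝ) : ℂ) = (a : ℂ) * (a : ℂ) by push_cast [← ha2]; ring]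
    push_cast
    module
  have hGpsd : G.PosSemidef := by
    set b : ℝ := Real.sqrt (2 * a) with hb
    have hbpos : 0 < b := Real.sqrt_pos.mpr (by linarith)
    have hb2 : b * b = 2 * a := Real.mul_self_sqrt (by linarith)
    have key : (((1 / b : ℝ) : ℂ) • G)ᴴ * (((1 / b : ℝ) : ℂ) • G) = G := by
      rw [Matrix.conjTranspose_smul, hGherm.eq, smul_mul_assoc, mul_smul_comm, hGG,
        smul_smul, smul_smul]
      nth_rewrite 2 [← one_smul ℂ G]
      congr 1
      simp only [Complex.star_def, Complex.conj_ofReal]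
      norm_cast
      field_simp
      linarith [hb2]
    have := Matrix.posSemidef_conjTranspose_mul_self (((1 / b : ℝ) : ℂ) • G)
    rwa [key] at this
  have htrG : (ρ * G).trace.re = a - s := by
    unfold G
    rw [mul_sub, Matrix.mul_smul, mul_one, Matrix.trace_sub, Matrix.trace_smul, htr, htrF]
    simp
  have hnn := trace_mul_re_nonneg hρ hGpsd
  rw [htrG] at hnn
  -- s ≤ a = sqrt s  and  a * a = s  ⟹  s ≤ 1
  nlinarith [ha2, hnn, hspos, hapos]
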